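/- Let X be a complete normed real vector space, let h : X → X be a bijection whose inverse h⁻¹ is Lipschitz with constant κ ≥ 0, and let e : X → X be Lipschitz with constant μ ≥ 0, with κμ < 1. Fix y ∈ X, let x₀ ∈ X be arbitrary, and define the quasi-Newton sequence by x_{k+1} = h⁻¹(y − e(x_k)) (i.e. h(x_{k+1}) + e(x_k) = y). Then ‖x_{k+1} − x_k‖ ≤ κμ ‖x_k − x_{k−1}‖ for all k ≥ 1, the sequence (x_k) converges to a point x* satisfying h(x*) + e(x*) = y, and ‖x_k − x*‖ ≤ (κμ)^k ‖x₁ − x₀‖ / (1 − κμ) for all k (geometric convergence). -/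

import Mathlib

open Filter

/-- Quasi-Newton iteration for `f = h + e` with `h⁻¹` κ-Lipschitz and `e` μ-Lipschitz,
`κμ < 1`: the iterates contract geometrically and converge to a solution of
`h x + e x = y`. -/
theorem stmt_0 {X : Type*} [NormedAddCommGroup X] [NormedSpace ℝ X] [CompleteSpace X]
    (h hinv e : X → X) (κ μ : ℝ) (hκ : 0 ≤ κ) (hμ : 0 ≤ μ)
    (hli : Function.LeftInverse hinv h) (hri : Function.RightInverse hinv h)
    (hinvLip : ∀ a b, ‖hinv a - hinv b‖ ≤ κ * ‖a - b‖)
    (heLip : ∀ a b, ‖e a - e b‖ ≤ μ * ‖a - b‖)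
    (hκμ : κ * μ < 1)
    (y x₀ : X) (x : ℕ → X) (hx0 : x 0 = x₀)
    (hrec : ∀ k, x (k + 1) = hinv (y - e (x k))) :
    (∀ k, 1 ≤ k → ‖x (k + 1) - x k‖ ≤ κ * μ * ‖x k - x (k - 1)‖) ∧
    ∃ xs : X, Tendsto x atTop (nhds xs) ∧ h xs + e xs = y ∧
      ∀ k, ‖x k - xs‖ ≤ (κ * μ) ^ k * ‖x 1 - x 0‖ / (1 - κ * μ) := by
  -- contraction step
  have step : ∀ k : ℕ, ‖x (k + 2) - x (k + 1)‖ ≤ κ * μ * ‖x (k + 1) - x k‖ := by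
    intro k
    calc ‖x (k + 2) - x (k + 1)‖
        = ‖hinv (y - e (x (k+1))) - hinv (y - e (x k))‖ := by
          rw [← hrec (k+1), ← hrec k]
      _ ≤ κ * ‖(y - e (x (k+1))) - (y - e (x k))‖ := hinvLip _ _
      _ = κ * ‖e (x k) - e (x (k+1))‖ := by rw [sub_sub_sub_cancel_left]
      _ ≤ κ * (μ * ‖x k - x (k+1)‖) := mul_le_mul_of_nonneg_left (heLip _ _) hκ
      _ = κ * μ * ‖x (k+1) - x k‖ := by rw [norm_sub_rev]; ring
  have hstep : ∀ k, 1 ≤ k → ‖x (k + 1) - x k‖ ≤ κ * μ * ‖x k - x (k - 1)‖ := by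
    intro k hk
    match k, hk with
    | (n+1), _ => simpa using step n
  refine ⟨hstep, ?_⟩
  set r := κ * μ with hr
  have hr0 : 0 ≤ r := mul_nonneg hκ hμ
  set C := ‖x 1 - x 0‖ with hC
  have geo : ∀ n, dist (x n) (x (n + 1)) ≤ C * r ^ n := by
    intro n
    induction n with
    | zero => simp [dist_eq_norm, C, norm_sub_rev]
    | succ n ih =>
      have := step n
      rw [dist_eq_norm, norm_sub_rev] at ih ⊢
      calc ‖x (n + 2) - x (n + 1)‖ ≤ r * ‖x (n + 1) - x n‖ := this
        _ ≤ r * (C * r ^ n) := mul_le_mul_of_nonneg_left ih hr0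
        _ = C * r ^ (n + 1) := by ring
  have hcau : CauchySeq x := cauchySeq_of_le_geometric r C hκμ geo
  obtain ⟨xs, hxs⟩ := cauchySeq_tendsto_of_complete hcau
  refine ⟨xs, hxs, ?_, ?_⟩
  · -- fixed point
    have hlipinv : LipschitzWith ⟨κ, hκ⟩ hinv :=
      LipschitzWith.of_dist_le_mul fun a b => by
        exact (by simpa [dist_eq_norm] using hinvLip a b : dist (hinv a) (hinv b) ≤ κ * dist a b)
    have hlipe : LipschitzWith ⟨μ, hμ⟩ e :=
      LipschitzWith.of_dist_le_mul fun a b => by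
        exact (by simpa [dist_eq_norm] using heLip a b : dist (e a) (e b) ≤ μ * dist a b)
    have h1 : Tendsto (fun k => x (k + 1)) atTop (nhds xs) :=
      hxs.comp (tendsto_add_atTop_nat 1)
    have h2 : Tendsto (fun k => hinv (y - e (x k))) atTop (nhds (hinv (y - e xs))) :=
      (hlipinv.continuous.tendsto _).comp
        ((continuous_const.sub hlipe.continuous).tendsto _ |>.comp hxs)
    have heq : xs = hinv (y - e xs) :=
      tendsto_nhds_unique (by simpa only [hrec] using h1) h2
    have : h xs = y - e xs := by conv_lhs => rw [heq, hri (y - e xs)]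
    rw [this]; abel
  · intro k
    have := dist_le_of_le_geometric_of_tendsto r C hκμ geo hxs k
    rw [dist_eq_norm] at this
    calc ‖x k - xs‖ ≤ C * r ^ k / (1 - r) := this
      _ = r ^ k * C / (1 - r) := by ring
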